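/- Assume the graph whose vertices are the cells 𝒯 and which has an edge between K and L for every σ = K|L ∈ Σ is connected. Then the image of the discrete divergence div_𝒯 : 𝔽_𝒯 → ℝ^𝒯 is exactly {g ∈ ℝ^𝒯 : Σ_{K∈𝒯} g_K m_K = 0}; that is, Σ_K (div_𝒯 F)_K m_K = 0 for every F ∈ 𝔽_𝒯, and conversely for every g ∈ ℝ^𝒯 with Σ_K g_K m_K = 0 there exists F ∈ 𝔽_𝒯 with div_𝒯 F = g. -/

import Mathlib

open scoped BigOperators ENNReal RealInnerProductSpace
open Finset

namespace OTFV

/-- The Benamou–Brenier action density for a scalar flux value. -/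
noncomputable def Bact (p q : ℝ) : ℝ≥0∞ :=
  if 0 < p then ENNReal.ofReal (q ^ 2 / (2 * p))
  else if p = 0 ∧ q = 0 then 0 else ⊤

/-- Combinatorial/metric data of an admissible TPFA mesh: cells `T`, internal
edges `E`; an edge `σ` joins the two distinct cells `e1 σ` and `e2 σ`. -/
structure Mesh (T E : Type*) where
  e1 : E → T
  e2 : E → T
  ne : ∀ σ, e1 σ ≠ e2 σ
  m : T → ℝ
  m_pos : ∀ K, 0 < m K
  mS : E → ℝ
  mS_pos : ∀ σ, 0 < mS σ
  dS : E → ℝ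
  dS_pos : ∀ σ, 0 < dS σ
  d1 : E → ℝ   -- d_{K,σ} for K = e1 σ
  d2 : E → ℝ   -- d_{L,σ} for L = e2 σ
  d1_pos : ∀ σ, 0 < d1 σ
  d2_pos : ∀ σ, 0 < d2 σ
  d_sum : ∀ σ, d1 σ + d2 σ = dS σ

variable {T T' E : Type*}

/-- A conservative flux is encoded by its value `F σ = F_{K,σ}` on the side `K = e1 σ`
(so that `F_{L,σ} = -F σ` for `L = e2 σ`).  Discrete divergence. -/
noncomputable def divT [Fintype E] [DecidableEq T] (M : Mesh T E) (F : E → ℝ) (K : T) : ℝ :=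
  (∑ σ, ((if M.e1 σ = K then F σ else 0) + (if M.e2 σ = K then -F σ else 0)) * M.mS σ) / M.m K

/-- Discrete gradient, oriented from `e1 σ` to `e2 σ` (the `(K,σ)` component, `K = e1 σ`). -/
noncomputable def gradS (M : Mesh T E) (a : T → ℝ) (σ : E) : ℝ :=
  (a (M.e2 σ) - a (M.e1 σ)) / M.dS σ

/-- Linear (weighted arithmetic mean) reconstruction on edges. -/
noncomputable def linRec (M : Mesh T E) (a : T → ℝ) (σ : E) : ℝ :=
  (M.d1 σ / M.dS σ) * a (M.e1 σ) + (M.d2 σ / M.dS σ) * a (M.e2 σ)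

/-- Injection from coarse densities to fine densities, `p` maps a fine cell to its coarse cell. -/
def inj (p : T → T') (ρ : T' → ℝ) : T → ℝ := fun K => ρ (p K)

/-- Mass of a coarse cell. -/
noncomputable def coarseM [Fintype T] [DecidableEq T'] (M : Mesh T E) (p : T → T') (K' : T') : ℝ :=
  ∑ K ∈ Finset.univ.filter (fun K => p K = K'), M.m K

/-- Adjoint of the injection. -/
noncomputable def injAdj [Fintype T] [DecidableEq T'] (M : Mesh T E) (p : T → T')
    (a : T → ℝ) (K' : T') : ℝ :=
  (∑ K ∈ Finset.univ.filter (fun K => p K = K'), a K * M.m K) / coarseM M p K'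

/-- Adjoint of the linear reconstruction, `(L_Σ^* u)_K = Σ_{σ∈Σ_K} u_σ m_σ d_{K,σ}/m_K`. -/
noncomputable def linRecAdj [Fintype E] [DecidableEq T] (M : Mesh T E) (u : E → ℝ) (K : T) : ℝ :=
  (∑ σ, ((if M.e1 σ = K then u σ * M.mS σ * M.d1 σ else 0) +
          (if M.e2 σ = K then u σ * M.mS σ * M.d2 σ else 0))) / M.m K

/-- `R_{𝒯'} = 𝕀^* ∘ L_Σ^*`. -/
noncomputable def coarseRec [Fintype T] [Fintype E] [DecidableEq T] [DecidableEq T']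
    (M : Mesh T E) (p : T → T') (u : E → ℝ) (K' : T') : ℝ :=
  injAdj M p (linRecAdj M u) K'

/-- Weighted scalar product on the coarse space. -/
noncomputable def iprodC [Fintype T] [Fintype T'] [DecidableEq T'] (M : Mesh T E) (p : T → T')
    (a b : T' → ℝ) : ℝ :=
  ∑ K', a K' * b K' * coarseM M p K'

/-- The discrete Benamou–Brenier functional `B_{N,𝒯}`; the time step is `τ = 1/(N+1)`,
`ρ k.succ` stands for `ρ^k` and `ρ k.castSucc` for `ρ^{k-1}`, `k = 1, …, N+1`. -/
noncomputable def Benergy [Fintype E] [Fintype T'] (M : Mesh T E) (p : T → T') (N : ℕ)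
    (ρ : Fin (N+2) → T' → ℝ) (F : Fin (N+1) → E → ℝ) : ℝ≥0∞ :=
  if ∀ k K', 0 ≤ ρ k K' then
    ∑ k : Fin (N+1),
      ENNReal.ofReal ((1:ℝ)/(N+1)) *
        ∑ σ, Bact (linRec M (inj p (fun K' => (ρ k.succ K' + ρ k.castSucc K') / 2)) σ) (F k σ) *
          ENNReal.ofReal (M.mS σ * M.dS σ)
  else ⊤

/-- The discrete continuity equation. -/
def ContEq [Fintype E] [DecidableEq T] (M : Mesh T E) (p : T → T') (N : ℕ)
    (ρ : Fin (N+2) → T' → ℝ) (F : Fin (N+1) → E → ℝ) : Prop :=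
  ∀ (k : Fin (N+1)) (K : T),
    (ρ k.succ (p K) - ρ k.castSucc (p K)) / ((1:ℝ)/(N+1)) + divT M (F k) K = 0

/-- The constraint set `𝒞_{N,𝒯}`. -/
def Cset [Fintype E] [DecidableEq T] (M : Mesh T E) (p : T → T') (N : ℕ)
    (ρin ρf : T' → ℝ) : Set ((Fin (N+2) → T' → ℝ) × (Fin (N+1) → E → ℝ)) :=
  {x | x.1 0 = ρin ∧ x.1 (Fin.last (N+1)) = ρf ∧ ContEq M p N x.1 x.2}

/-- The (halved, squared) discrete Wasserstein distance: `W² = 2 inf B`. -/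
noncomputable def Wdist2 [Fintype E] [Fintype T'] [DecidableEq T] (M : Mesh T E) (p : T → T')
    (N : ℕ) (ρin ρf : T' → ℝ) : ℝ≥0∞ :=
  2 * ⨅ (x : (Fin (N+2) → T' → ℝ) × (Fin (N+1) → E → ℝ)) (_ : x ∈ Cset M p N ρin ρf),
    Benergy M p N x.1 x.2

/-- Logarithmic barrier. -/
noncomputable def Jlog (x : ℝ) : EReal := if 0 < x then ((- Real.log x : ℝ) : EReal) else ⊤

/-- The barrier functional `J_{N,𝒯}` (only the interior times `k = 1, …, N`). -/
noncomputable def Jbar [Fintype T] [Fintype T'] [DecidableEq T'] (M : Mesh T E) (p : T → T')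
    (N : ℕ) (ρ : Fin (N+2) → T' → ℝ) : EReal :=
  ∑ k : Fin N, (((1:ℝ)/(N+1) : ℝ) : EReal) *
    ∑ K', Jlog (ρ (k.succ.castSucc) K') * ((coarseM M p K' : ℝ) : EReal)

/-- Perturbed objective `B_{N,𝒯} + μ J_{N,𝒯}`, with values in `EReal`. -/
noncomputable def Pobj [Fintype T] [Fintype T'] [Fintype E] [DecidableEq T'] (M : Mesh T E)
    (p : T → T') (N : ℕ) (μ : ℝ) (ρ : Fin (N+2) → T' → ℝ) (F : Fin (N+1) → E → ℝ) : EReal :=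
  (Benergy M p N ρ F : EReal) + (μ : EReal) * Jbar M p N ρ

/-- Connectivity of the graph of cells induced by the internal edges. -/
def MeshConnected (M : Mesh T E) : Prop :=
  ∀ K L : T, Relation.ReflTransGen
    (fun a b => ∃ σ, (M.e1 σ = a ∧ M.e2 σ = b) ∨ (M.e1 σ = b ∧ M.e2 σ = a)) K L

section Helpers

open Classical in
lemma divT_zero' {T E : Type*} [Fintype E] [DecidableEq T] (M : Mesh T E) (K : T) :
    divT M 0 K = 0 := by
  simp [divT]

variable {T E : Type*} [Fintype E] [DecidableEq T] [DecidableEq E] (M : Mesh T E)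

lemma divT_add' (F G : E → ℝ) (K : T) :
    divT M (F + G) K = divT M F K + divT M G K := by
  unfold divT
  rw [← add_div]
  congr 1
  rw [← Finset.sum_add_distrib]
  refine Finset.sum_congr rfl fun σ _ => ?_
  simp only [Pi.add_apply]
  split_ifs <;> ring

lemma divT_smul' (c : ℝ) (F : E → ℝ) (K : T) :
    divT M (c • F) K = c * divT M F K := by
  unfold divT
  rw [mul_div_assoc']
  congr 1
  rw [Finset.mul_sum]
  refine Finset.sum_congr rfl fun σ _ => ?_
  simp only [Pi.smul_apply, smul_eq_mul]
  split_ifs <;> ring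

lemma divT_sum' {ι : Type*} [DecidableEq ι] (s : Finset ι) (c : ι → ℝ) (Φ : ι → E → ℝ) (K : T) :
    divT M (∑ i ∈ s, c i • Φ i) K = ∑ i ∈ s, c i * divT M (Φ i) K := by
  induction s using Finset.induction with
  | empty => simpa using divT_zero' M K
  | insert _ _ h ih =>
    rw [Finset.sum_insert h, Finset.sum_insert h, divT_add', divT_smul', ih]

lemma divT_single (σ : E) (t : ℝ) (K : T) :
    divT M (fun τ => if τ = σ then t else 0) K =
      ((if M.e1 σ = K then t else 0) + (if M.e2 σ = K then -t else 0)) * M.mS σ / M.m K := by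
  unfold divT
  congr 1
  rw [Finset.sum_eq_single σ]
  · simp
  · intro τ _ hτ; simp [hτ]
  · simp

lemma pair_flux (K L : T)
    (h : Relation.ReflTransGen
      (fun a b => ∃ σ, (M.e1 σ = a ∧ M.e2 σ = b) ∨ (M.e1 σ = b ∧ M.e2 σ = a)) K L) :
    ∃ F : E → ℝ, divT M F =
      fun X => ((if X = K then 1 else 0) - (if X = L then 1 else 0)) / M.m X := by
  induction h with
  | refl =>
    refine ⟨0, funext fun X => ?_⟩
    simp [divT_zero']
  | @tail b c hab hbc ih =>
    obtain ⟨F, hF⟩ := ih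
    obtain ⟨σ, hcase⟩ := hbc
    have hmS : M.mS σ ≠ 0 := (M.mS_pos σ).ne'
    rcases hcase with ⟨h1, h2⟩ | ⟨h1, h2⟩
    · refine ⟨F + fun τ => if τ = σ then (M.mS σ)⁻¹ else 0, funext fun X => ?_⟩
      rw [divT_add', hF, divT_single, h1, h2, ← add_div]
      congr 1
      simp only [show ∀ y : T, (b = y) = (y = b) from fun y => propext eq_comm,
        show ∀ y : T, (c = y) = (y = c) from fun y => propext eq_comm]
      split_ifs <;> field_simp <;> ring
    · refine ⟨F + fun τ => if τ = σ then -(M.mS σ)⁻¹ else 0, funext fun X => ?_⟩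
      rw [divT_add', hF, divT_single, h1, h2, ← add_div]
      congr 1
      simp only [show ∀ y : T, (b = y) = (y = b) from fun y => propext eq_comm,
        show ∀ y : T, (c = y) = (y = c) from fun y => propext eq_comm]
      split_ifs <;> field_simp <;> ring

end Helpers

end OTFV

open OTFV

theorem div_image
    {T E : Type*} [Fintype T] [Fintype E] [DecidableEq T]
    (M : Mesh T E) (hconn : MeshConnected M) :
    (∀ F : E → ℝ, ∑ K, divT M F K * M.m K = 0) ∧
    (∀ g : T → ℝ, ∑ K, g K * M.m K = 0 → ∃ F : E → ℝ, divT M F = g) := by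
  classical
  constructor
  · intro F
    unfold divT
    have hrw : ∀ K : T, (∑ σ, ((if M.e1 σ = K then F σ else 0) + (if M.e2 σ = K then -F σ else 0)) * M.mS σ) / M.m K * M.m K
        = ∑ σ, ((if M.e1 σ = K then F σ else 0) + (if M.e2 σ = K then -F σ else 0)) * M.mS σ := by
      intro K; exact div_mul_cancel₀ _ (M.m_pos K).ne'
    simp_rw [hrw]
    rw [Finset.sum_comm]
    refine Finset.sum_eq_zero fun σ _ => ?_
    rw [← Finset.sum_mul, Finset.sum_add_distrib, Finset.sum_ite_eq Finset.univ (M.e1 σ),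
      Finset.sum_ite_eq Finset.univ (M.e2 σ)]
    simp
  · intro g hg
    rcases isEmpty_or_nonempty T with hT | hT
    · exact ⟨0, funext fun K => (IsEmpty.false K).elim⟩
    obtain ⟨K0⟩ := hT
    choose Φ hΦ using fun L => pair_flux M L K0 (hconn L K0)
    refine ⟨∑ L, (g L * M.m L) • Φ L, funext fun K => ?_⟩
    rw [divT_sum']
    simp only [hΦ]
    have hmK : M.m K ≠ 0 := (M.m_pos K).ne'
    have expand : ∀ L, g L * M.m L * (((if K = L then 1 else 0) - (if K = K0 then 1 else 0)) / M.m K)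
        = g L * M.m L * (if K = L then 1 else 0) / M.m K
          - g L * M.m L * (if K = K0 then 1 else 0) / M.m K := by
      intro L; ring
    simp_rw [expand]
    rw [Finset.sum_sub_distrib, ← Finset.sum_div, ← Finset.sum_div]
    have h1 : ∑ L, g L * M.m L * (if K = L then 1 else 0) = g K * M.m K := by
      rw [Finset.sum_eq_single K]
      · simp
      · intro L _ hL; simp [Ne.symm hL]
      · simp
    have h2 : ∑ L, g L * M.m L * (if K = K0 then 1 else 0) = 0 := by
      by_cases hK : K = K0 <;> simp [hK, hg]
    rw [h1, h2]
    field_simp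
    ring
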